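/- Let μ be a σ-finite measure on a measurable space W, and let π : {0,1} × W → ℝ and γ : {0,1} × {0,1} × W → ℝ be measurable with π(x,w) > 0, γ(m,x,w) > 0, π(0,w) + π(1,w) = 1, and γ(0,x,w) + γ(1,x,w) = 1 for all (x,w). Let P be the measure on {0,1} × {0,1} × W (coordinates (x,m,w)) having density (x,m,w) ↦ π(x,w)·γ(m,x,w) with respect to the product of counting measure on {0,1} × {0,1} and μ. Then for every measurable h : {0,1} × {0,1} × W → ℝ such that w ↦ h(x,m,w) is μ-integrable for each (x,m), ∫ [(2x−1)/π(x,w)]·[γ(m,0,w)/γ(m,x,w)]·h(x,m,w) dP(x,m,w) = ∫ Σ_{m∈{0,1}} (h(1,m,w) − h(0,m,w))·γ(m,0,w) dμ(w). -/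

import Mathlib

open MeasureTheory

lemma measurable_bool_prod {α γ : Type*} [MeasurableSpace α] [MeasurableSpace γ]
    {f : Bool × α → γ} (h1 : Measurable fun a => f (true, a))
    (h2 : Measurable fun a => f (false, a)) : Measurable f := by
  have hrw : f = fun p => if p.1 = true then f (true, p.2) else f (false, p.2) := by
    ext ⟨b, a⟩; cases b <;> simp
  rw [hrw]
  exact Measurable.ite (measurable_fst (measurableSet_singleton true))
    (h1.comp measurable_snd) (h2.comp measurable_snd)

lemma integral_count_bool_prod {α : Type*} [MeasurableSpace α] (ρ : Measure α) [SFinite ρ]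
    (f : Bool × α → ℝ) (hf : Measurable f)
    (hint : ∀ b, Integrable (fun a => f (b, a)) ρ) :
    ∫ p, f p ∂((Measure.count : Measure Bool).prod ρ) = ∑ b : Bool, ∫ a, f (b, a) ∂ρ := by
  have hc : (Measure.count : Measure Bool) = Measure.dirac true + Measure.dirac false := by
    rw [Measure.count, Measure.sum_bool]
  have hib : ∀ b : Bool, Integrable f (ρ.map (Prod.mk b)) := fun b =>
    (integrable_map_measure hf.aestronglyMeasurable measurable_prodMk_left.aemeasurable).2
      (hint b)
  rw [hc, Measure.add_prod, Measure.dirac_prod, Measure.dirac_prod,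
    integral_add_measure (hib true) (hib false),
    integral_map measurable_prodMk_left.aemeasurable hf.aestronglyMeasurable,
    integral_map measurable_prodMk_left.aemeasurable hf.aestronglyMeasurable,
    Fintype.sum_bool]

lemma integral_count_bool_bool_prod {W : Type*} [MeasurableSpace W] (μ : Measure W)
    [SigmaFinite μ] (f : Bool × Bool × W → ℝ) (hf : Measurable f)
    (hint : ∀ x m, Integrable (fun w => f (x, m, w)) μ) :
    ∫ p, f p ∂((Measure.count : Measure Bool).prod ((Measure.count : Measure Bool).prod μ))
      = ∑ x : Bool, ∑ m : Bool, ∫ w, f (x, m, w) ∂μ := by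
  rw [integral_count_bool_prod _ f hf]
  · exact Finset.sum_congr rfl fun x _ =>
      integral_count_bool_prod μ (fun q => f (x, q)) (hf.comp measurable_prodMk_left)
        (hint x)
  · intro b
    have hc : (Measure.count : Measure Bool) = Measure.dirac true + Measure.dirac false := by
      rw [Measure.count, Measure.sum_bool]
    have hf' : Measurable fun q : Bool × W => f (b, q) := hf.comp measurable_prodMk_left
    have hib : ∀ m : Bool, Integrable (fun q : Bool × W => f (b, q)) (μ.map (Prod.mk m)) :=
      fun m => (integrable_map_measure hf'.aestronglyMeasurable
        measurable_prodMk_left.aemeasurable).2 (hint b m)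
    rw [hc, Measure.add_prod, Measure.dirac_prod, Measure.dirac_prod]
    exact (hib true).add_measure (hib false)

theorem nde_constraint_gradient_ipw
    {W : Type*} [MeasurableSpace W] (μ : Measure W) [SigmaFinite μ]
    (π : Bool → W → ℝ) (γ : Bool → Bool → W → ℝ)
    (hπ : ∀ x, Measurable (π x)) (hγ : ∀ m x, Measurable (γ m x))
    (hπpos : ∀ x w, 0 < π x w) (hγpos : ∀ m x w, 0 < γ m x w)
    (hπsum : ∀ w, π false w + π true w = 1)
    (hγsum : ∀ x w, γ false x w + γ true x w = 1)
    (P : Measure (Bool × Bool × W))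
    (hP : P = ((Measure.count : Measure Bool).prod
          ((Measure.count : Measure Bool).prod μ)).withDensity
        (fun p => ENNReal.ofReal (π p.1 p.2.2 * γ p.2.1 p.1 p.2.2)))
    (h : Bool → Bool → W → ℝ)
    (hm : Measurable (fun p : Bool × Bool × W => h p.1 p.2.1 p.2.2))
    (hint : ∀ x m, Integrable (h x m) μ) :
    (∫ p, ((if p.1 then (1 : ℝ) else -1) / π p.1 p.2.2)
        * (γ p.2.1 false p.2.2 / γ p.2.1 p.1 p.2.2) * h p.1 p.2.1 p.2.2 ∂P)
      = ∫ w, (∑ m : Bool, (h true m w - h false m w) * γ m false w) ∂μ := by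
  -- measurability of the density pieces
  have hπm : Measurable (fun p : Bool × Bool × W => π p.1 p.2.2) := by
    have : Measurable (fun q : Bool × W => π q.1 q.2) :=
      measurable_bool_prod (hπ true) (hπ false)
    exact this.comp (measurable_fst.prodMk (measurable_snd.comp measurable_snd))
  have hγm : Measurable (fun p : Bool × Bool × W => γ p.2.1 p.1 p.2.2) := by
    apply measurable_bool_prod (α := Bool × W) <;>
    · exact measurable_bool_prod (by exact hγ true _) (by exact hγ false _)
  have hγ0m : Measurable (fun p : Bool × Bool × W => γ p.2.1 false p.2.2) := by
    have : Measurable (fun q : Bool × W => γ q.1 false q.2) :=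
      measurable_bool_prod (hγ true false) (hγ false false)
    exact this.comp measurable_snd
  have hdnn : Measurable (fun p : Bool × Bool × W =>
      (π p.1 p.2.2 * γ p.2.1 p.1 p.2.2).toNNReal) := (hπm.mul hγm).real_toNNReal
  rw [hP]
  rw [show (fun p : Bool × Bool × W => ENNReal.ofReal (π p.1 p.2.2 * γ p.2.1 p.1 p.2.2))
      = (fun p => (((π p.1 p.2.2 * γ p.2.1 p.1 p.2.2).toNNReal : NNReal) : ENNReal)) from rfl]
  rw [integral_withDensity_eq_integral_smul hdnn]
  -- pointwise simplification
  have hpt : (fun p : Bool × Bool × W => (π p.1 p.2.2 * γ p.2.1 p.1 p.2.2).toNNReal •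
        (((if p.1 then (1 : ℝ) else -1) / π p.1 p.2.2)
          * (γ p.2.1 false p.2.2 / γ p.2.1 p.1 p.2.2) * h p.1 p.2.1 p.2.2))
      = fun p => (if p.1 then (1 : ℝ) else -1) * (γ p.2.1 false p.2.2 * h p.1 p.2.1 p.2.2) := by
    funext p
    have h1 : π p.1 p.2.2 ≠ 0 := (hπpos _ _).ne'
    have h2 : γ p.2.1 p.1 p.2.2 ≠ 0 := (hγpos _ _ _).ne'
    rw [NNReal.smul_def, Real.coe_toNNReal _ (mul_nonneg (hπpos p.1 p.2.2).le (hγpos _ _ _).le)]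
    field_simp
    rw [smul_eq_mul]
    field_simp
  rw [hpt]
  -- γ bounded by 1
  have hγle : ∀ m x w, γ m x w ≤ 1 := by
    intro m x w
    have := hγsum x w
    rcases m <;> nlinarith [hγpos false x w, hγpos true x w]
  -- integrability of slices
  have hintsl : ∀ x m : Bool, Integrable
      (fun w => (if x then (1 : ℝ) else -1) * (γ m false w * h x m w)) μ := by
    intro x m
    refine Integrable.const_mul ?_ _
    refine Integrable.bdd_mul (hint x m) (hγ m false).aestronglyMeasurable
      (c := 1) (Filter.Eventually.of_forall fun w => ?_)
    rw [Real.norm_eq_abs, abs_of_pos (hγpos m false w)]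
    exact hγle m false w
  have hmeasF : Measurable (fun p : Bool × Bool × W =>
      (if p.1 then (1 : ℝ) else -1) * (γ p.2.1 false p.2.2 * h p.1 p.2.1 p.2.2)) := by
    apply measurable_bool_prod (α := Bool × W)
    · exact measurable_const.mul ((measurable_bool_prod (hγ true false) (hγ false false)).mul
        (hm.comp measurable_prodMk_left))
    · exact measurable_const.mul ((measurable_bool_prod (hγ true false) (hγ false false)).mul
        (hm.comp measurable_prodMk_left))
  rw [integral_count_bool_bool_prod μ _ hmeasF hintsl]
  -- RHS
  have hIg0 : ∀ x m : Bool, Integrable (fun w => γ m false w * h x m w) μ := by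
    intro x m
    refine Integrable.bdd_mul (hint x m) (hγ m false).aestronglyMeasurable
      (c := 1) (Filter.Eventually.of_forall fun w => ?_)
    rw [Real.norm_eq_abs, abs_of_pos (hγpos m false w)]
    exact hγle m false w
  have hrhsint : ∀ m : Bool, Integrable (fun w => (h true m w - h false m w) * γ m false w) μ := by
    intro m
    exact (((hIg0 true m).sub (hIg0 false m)).congr
      (Filter.Eventually.of_forall fun w => by simp only [Pi.sub_apply]; ring))
  have : (fun w => ∑ m : Bool, (h true m w - h false m w) * γ m false w)
      = fun w => ∑ m ∈ Finset.univ, (h true m w - h false m w) * γ m false w := rfl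
  rw [this, integral_finset_sum _ (fun m _ => hrhsint m)]
  simp only [Fintype.sum_bool, reduceIte]
  have hIg := hIg0
  have key : ∀ m : Bool, ∫ w, (h true m w - h false m w) * γ m false w ∂μ
      = ∫ w, γ m false w * h true m w ∂μ - ∫ w, γ m false w * h false m w ∂μ := by
    intro m
    rw [← integral_sub (hIg true m) (hIg false m)]
    exact integral_congr_ae (Filter.Eventually.of_forall fun w => by ring)
  have hneg : ∀ (f : W → ℝ), ∫ w, (if false = true then (1:ℝ) else -1) * f w ∂μ
      = -∫ w, f w ∂μ := by
    intro f
    rw [show (if false = true then (1:ℝ) else -1) = -1 by simp, ← integral_neg]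
    exact integral_congr_ae (Filter.Eventually.of_forall fun w => by ring)
  rw [hneg, hneg, key true, key false]
  ring
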